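/- Define on the punctured unit disk B₁ \ {0} ⊂ ℝ² the matrix a₁₁ = (M x₁² + x₂²)/|x|², a₂₂ = (x₁² + M x₂²)/|x|², a₁₂ = a₂₁ = (M−1) x₁ x₂ / |x|² with constant M > 1. Then the function u(x) = |x|^{1/√M} · x₁/|x| satisfies ∑_{i,j=1}² ∂_{x_i}(a_{ij} ∂_{x_j} u) = 0 pointwise on B₁ \ {0}. -/

import Mathlib

/-- Partial derivative of a function on `ℝ × ℝ` in the `i`-th coordinate direction. -/
noncomputable def pd2 (i : Fin 2) (f : ℝ × ℝ → ℝ) (x : ℝ × ℝ) : ℝ :=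
  fderiv ℝ f x (if i = 0 then ((1 : ℝ), (0 : ℝ)) else ((0 : ℝ), (1 : ℝ)))

/-- Coefficients of the Meyers–Piccinini–Spagnolo example. -/
noncomputable def meyersA (M : ℝ) (i j : Fin 2) (x : ℝ × ℝ) : ℝ :=
  if i = 0 ∧ j = 0 then (M * x.1 ^ 2 + x.2 ^ 2) / (x.1 ^ 2 + x.2 ^ 2)
  else if i = 1 ∧ j = 1 then (x.1 ^ 2 + M * x.2 ^ 2) / (x.1 ^ 2 + x.2 ^ 2)
  else (M - 1) * x.1 * x.2 / (x.1 ^ 2 + x.2 ^ 2)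

/-- `u(x) = |x|^{1/√M} x₁/|x|`, written as `(x₁² + x₂²)^{(1/√M − 1)/2} · x₁`. -/
noncomputable def meyersU (M : ℝ) (x : ℝ × ℝ) : ℝ :=
  (x.1 ^ 2 + x.2 ^ 2) ^ ((1 / Real.sqrt M - 1) / 2) * x.1

lemma pd2_zero (f : ℝ × ℝ → ℝ) (x : ℝ × ℝ) :
    pd2 0 f x = fderiv ℝ f x ((1 : ℝ), (0 : ℝ)) := by rw [pd2]; norm_num

lemma pd2_one (f : ℝ × ℝ → ℝ) (x : ℝ × ℝ) :
    pd2 1 f x = fderiv ℝ f x ((0 : ℝ), (1 : ℝ)) := by rw [pd2]; norm_num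

set_option maxHeartbeats 2000000 in
theorem meyers_example_solves (M : ℝ) (hM : 1 < M) :
    ∀ x : ℝ × ℝ, x ≠ 0 → x.1 ^ 2 + x.2 ^ 2 < 1 →
      (∑ i : Fin 2,
        pd2 i (fun y => ∑ j : Fin 2, meyersA M i j y * pd2 j (meyersU M) y) x) = 0 := by
  intro x hx0 _
  have hM0 : (0 : ℝ) < M := lt_trans one_pos hM
  set c : ℝ := (1 / Real.sqrt M - 1) / 2 with hc
  have hs : 0 < x.1 ^ 2 + x.2 ^ 2 := by
    have h : x.1 ≠ 0 ∨ x.2 ≠ 0 := by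
      by_contra h; push_neg at h
      exact hx0 (Prod.ext h.1 h.2)
    rcases h with h | h <;> positivity
  -- closed forms for the fluxes on the punctured plane
  have flux : ∀ y : ℝ × ℝ, 0 < y.1 ^ 2 + y.2 ^ 2 →
      ((∑ j : Fin 2, meyersA M 0 j y * pd2 j (meyersU M) y) =
        ((M * y.1 ^ 2 + y.2 ^ 2) * ((y.1 ^ 2 + y.2 ^ 2) + 2 * c * y.1 ^ 2)
          + 2 * c * (M - 1) * (y.1 ^ 2 * y.2 ^ 2)) * (y.1 ^ 2 + y.2 ^ 2) ^ (c - 2))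
      ∧ ((∑ j : Fin 2, meyersA M 1 j y * pd2 j (meyersU M) y) =
        ((M - 1) * (y.1 * y.2) * ((y.1 ^ 2 + y.2 ^ 2) + 2 * c * y.1 ^ 2)
          + 2 * c * (y.1 * y.2) * (y.1 ^ 2 + M * y.2 ^ 2)) * (y.1 ^ 2 + y.2 ^ 2) ^ (c - 2)) := by
    intro y hy
    have h1sq : HasFDerivAt (fun y : ℝ × ℝ => y.1 ^ 2) _ y :=
      (hasDerivAt_pow 2 y.1).comp_hasFDerivAt y (hasFDerivAt_fst (𝕜 := ℝ))
    have h2sq : HasFDerivAt (fun y : ℝ × ℝ => y.2 ^ 2) _ y :=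
      (hasDerivAt_pow 2 y.2).comp_hasFDerivAt y (hasFDerivAt_snd (𝕜 := ℝ))
    have hu := ((h1sq.add h2sq).rpow_const (p := c) (Or.inl hy.ne')).mul (hasFDerivAt_fst (𝕜 := ℝ))
    have e : fderiv ℝ (meyersU M) y = _ := hu.fderiv
    have v1 : pd2 0 (meyersU M) y
        = (y.1 ^ 2 + y.2 ^ 2) ^ c + 2 * c * y.1 ^ 2 * (y.1 ^ 2 + y.2 ^ 2) ^ (c - 1) := by
      rw [pd2_zero, e]; simp; ring
    have v2 : pd2 1 (meyersU M) y
        = 2 * c * y.1 * y.2 * (y.1 ^ 2 + y.2 ^ 2) ^ (c - 1) := by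
      rw [pd2_one, e]; simp; ring
    have e0 : (y.1 ^ 2 + y.2 ^ 2) ^ c
        = (y.1 ^ 2 + y.2 ^ 2) ^ (c - 2) * (y.1 ^ 2 + y.2 ^ 2) ^ (2 : ℕ) := by
      rw [← Real.rpow_natCast (y.1 ^ 2 + y.2 ^ 2) 2, ← Real.rpow_add hy]; norm_num
    have e1 : (y.1 ^ 2 + y.2 ^ 2) ^ (c - 1)
        = (y.1 ^ 2 + y.2 ^ 2) ^ (c - 2) * (y.1 ^ 2 + y.2 ^ 2) := by
      rw [show c - 1 = (c - 2) + 1 by ring, Real.rpow_add hy, Real.rpow_one]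
    constructor <;>
      (rw [Fin.sum_univ_two, v1, v2, e0, e1]; simp only [meyersA]; norm_num; field_simp; try ring)
  -- rewrite the two outer derivatives using the closed forms
  have hU : IsOpen {y : ℝ × ℝ | 0 < y.1 ^ 2 + y.2 ^ 2} :=
    isOpen_lt continuous_const (by fun_prop)
  have hmem : {y : ℝ × ℝ | 0 < y.1 ^ 2 + y.2 ^ 2} ∈ nhds x := hU.mem_nhds hs
  have heq1 : (fun y => ∑ j : Fin 2, meyersA M 0 j y * pd2 j (meyersU M) y) =ᶠ[nhds x]
      (fun y : ℝ × ℝ => ((M * y.1 ^ 2 + y.2 ^ 2) * ((y.1 ^ 2 + y.2 ^ 2) + 2 * c * y.1 ^ 2)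
          + 2 * c * (M - 1) * (y.1 ^ 2 * y.2 ^ 2)) * (y.1 ^ 2 + y.2 ^ 2) ^ (c - 2)) :=
    Filter.eventually_of_mem hmem fun y hy => (flux y hy).1
  have heq2 : (fun y => ∑ j : Fin 2, meyersA M 1 j y * pd2 j (meyersU M) y) =ᶠ[nhds x]
      (fun y : ℝ × ℝ => ((M - 1) * (y.1 * y.2) * ((y.1 ^ 2 + y.2 ^ 2) + 2 * c * y.1 ^ 2)
          + 2 * c * (y.1 * y.2) * (y.1 ^ 2 + M * y.2 ^ 2)) * (y.1 ^ 2 + y.2 ^ 2) ^ (c - 2)) :=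
    Filter.eventually_of_mem hmem fun y hy => (flux y hy).2
  -- derivatives of the closed-form fluxes at x
  have h1sq : HasFDerivAt (fun y : ℝ × ℝ => y.1 ^ 2) _ x :=
    (hasDerivAt_pow 2 x.1).comp_hasFDerivAt x (hasFDerivAt_fst (𝕜 := ℝ))
  have h2sq : HasFDerivAt (fun y : ℝ × ℝ => y.2 ^ 2) _ x :=
    (hasDerivAt_pow 2 x.2).comp_hasFDerivAt x (hasFDerivAt_snd (𝕜 := ℝ))
  have hxy : HasFDerivAt (fun y : ℝ × ℝ => y.1 * y.2) _ x :=
    (hasFDerivAt_fst (𝕜 := ℝ)).mul (hasFDerivAt_snd (𝕜 := ℝ))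
  have hg := (h1sq.add h2sq).rpow_const (p := c - 2) (Or.inl hs.ne')
  have hF1 := ((((h1sq.const_mul M).add h2sq).mul
      ((h1sq.add h2sq).add (h1sq.const_mul (2 * c)))).add
      ((h1sq.mul h2sq).const_mul (2 * c * (M - 1)))).mul hg
  have hF2 := (((hxy.const_mul (M - 1)).mul
      ((h1sq.add h2sq).add (h1sq.const_mul (2 * c)))).add
      ((hxy.const_mul (2 * c)).mul (h1sq.add (h2sq.const_mul M)))).mul hg
  have eF1 : fderiv ℝ (fun y : ℝ × ℝ =>
      ((M * y.1 ^ 2 + y.2 ^ 2) * ((y.1 ^ 2 + y.2 ^ 2) + 2 * c * y.1 ^ 2)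
        + 2 * c * (M - 1) * (y.1 ^ 2 * y.2 ^ 2)) * (y.1 ^ 2 + y.2 ^ 2) ^ (c - 2)) x = _ :=
    hF1.fderiv
  have eF2 : fderiv ℝ (fun y : ℝ × ℝ =>
      ((M - 1) * (y.1 * y.2) * ((y.1 ^ 2 + y.2 ^ 2) + 2 * c * y.1 ^ 2)
        + 2 * c * (y.1 * y.2) * (y.1 ^ 2 + M * y.2 ^ 2)) * (y.1 ^ 2 + y.2 ^ 2) ^ (c - 2)) x = _ :=
    hF2.fderiv
  rw [Fin.sum_univ_two, pd2_zero, pd2_one, heq1.fderiv_eq, heq2.fderiv_eq, eF1, eF2]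
  simp
  have e3 : (x.1 ^ 2 + x.2 ^ 2) ^ (c - 2)
      = (x.1 ^ 2 + x.2 ^ 2) ^ (c - 2 - 1) * (x.1 ^ 2 + x.2 ^ 2) := by
    rw [← Real.rpow_add_one hs.ne']; congr 1; ring
  rw [e3]
  generalize (x.1 ^ 2 + x.2 ^ 2) ^ (c - 2 - 1) = E
  rw [hc]
  have hb2 : Real.sqrt M ^ 2 = M := Real.sq_sqrt hM0.le
  have hbne : Real.sqrt M ≠ 0 := by positivity
  generalize hb : Real.sqrt M = b at hb2 hbne
  rw [← hb2]
  field_simp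
  ring
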